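/- Let k_i, k_j ≥ 1 and d ≥ 1 be integers. For k ≥ 1, let |Φ_k⟩ = (1/√k) Σ_{x=1}^{k} |x⟩⊗|x⟩ ∈ ℂ^k ⊗ ℂ^k (a unit vector) and let τ_k = (1/k) Σ_{x=1}^{k} |x⟩⟨x| ⊗ |x⟩⟨x| (a density matrix on ℂ^k ⊗ ℂ^k). Let ω be any density matrix on ℂ^d. Then D( τ_{k_i} ⊗ |Φ_{k_j}⟩⟨Φ_{k_j}| ⊗ ω , |Φ_{k_i}⟩⟨Φ_{k_i}| ⊗ τ_{k_j} ⊗ ω ) ≥ 1 − 1/max{k_i, k_j}. (This is the trace-distance lower bound, for the database owner's states after an honest user's query i versus query j, that breaks user privacy in the quantum private queries protocol of Giovannetti, Lloyd and Maccone.) -/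

import Mathlib

open scoped Matrix Kronecker BigOperators ComplexOrder

/-- The square root of a positive semidefinite matrix, as `Matrix.PosSemidef.sqrt` was defined
in the older Mathlib (removed since). -/
noncomputable def Matrix.PosSemidef.sqrt {n 𝕜 : Type*} [Fintype n] [DecidableEq n] [RCLike 𝕜]
    {A : Matrix n n 𝕜} (hA : A.PosSemidef) : Matrix n n 𝕜 :=
  hA.1.eigenvectorUnitary.1 * Matrix.diagonal ((↑) ∘ (√·) ∘ hA.1.eigenvalues) *
    (star hA.1.eigenvectorUnitary : Matrix n n 𝕜)

noncomputable def traceNorm {n : Type*} [Fintype n] [DecidableEq n]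
    (A : Matrix n n ℂ) : ℝ :=
  ((Matrix.posSemidef_conjTranspose_mul_self A).sqrt.trace).re

noncomputable def traceDist {n : Type*} [Fintype n] [DecidableEq n]
    (ρ σ : Matrix n n ℂ) : ℝ :=
  traceNorm (ρ - σ) / 2

def IsDensityMatrix {n : Type*} [Fintype n] (ρ : Matrix n n ℂ) : Prop :=
  ρ.PosSemidef ∧ ρ.trace = 1

/-- The maximally entangled pure state `|Φ_k⟩ = (1/√k) Σ_x |x⟩⊗|x⟩` on `ℂ^k ⊗ ℂ^k`. -/
noncomputable def maxEntVec (k : ℕ) : Fin k × Fin k → ℂ :=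
  fun p => if p.1 = p.2 then ((Real.sqrt k)⁻¹ : ℂ) else 0

/-- The rank-one density matrix `|Φ_k⟩⟨Φ_k|`. -/
noncomputable def maxEntState (k : ℕ) : Matrix (Fin k × Fin k) (Fin k × Fin k) ℂ :=
  Matrix.vecMulVec (maxEntVec k) (star (maxEntVec k))

/-- The classically correlated state `τ_k = (1/k) Σ_x |x⟩⟨x| ⊗ |x⟩⟨x|`. -/
noncomputable def classCorrState (k : ℕ) : Matrix (Fin k × Fin k) (Fin k × Fin k) ℂ :=
  (k : ℂ)⁻¹ • ∑ x : Fin k,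
    (Matrix.single x x (1 : ℂ) ⊗ₖ Matrix.single x x (1 : ℂ))


open scoped MatrixOrder in
lemma Matrix.PosSemidef.sqrt_eq_CFC {n : Type*} [Fintype n] [DecidableEq n]
    {A : Matrix n n ℂ} (hA : A.PosSemidef) : hA.sqrt = CFC.sqrt A := by
  rw [CFC.sqrt_eq_real_sqrt A hA.nonneg, cfcₙ_eq_cfc, hA.1.cfc_eq]
  rfl

open scoped MatrixOrder in
lemma Matrix.PosSemidef.eq_sqrt_of_sq_eq {n : Type*} [Fintype n] [DecidableEq n]
    {S A : Matrix n n ℂ} (hS : S.PosSemidef) (hA : A.PosSemidef) (h : S ^ 2 = A) :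
    S = hA.sqrt := by
  rw [hA.sqrt_eq_CFC]
  exact (CFC.sqrt_unique (by rw [← sq]; exact h) hS.nonneg).symm

open scoped MatrixOrder in
lemma Matrix.PosSemidef.sq_sqrt {n : Type*} [Fintype n] [DecidableEq n]
    {A : Matrix n n ℂ} (hA : A.PosSemidef) : hA.sqrt ^ 2 = A := by
  rw [hA.sqrt_eq_CFC]; exact CFC.sq_sqrt A hA.nonneg

open scoped MatrixOrder in
lemma Matrix.PosSemidef.posSemidef_sqrt {n : Type*} [Fintype n] [DecidableEq n]
    {A : Matrix n n ℂ} (hA : A.PosSemidef) : hA.sqrt.PosSemidef := by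
  rw [hA.sqrt_eq_CFC]; exact Matrix.nonneg_iff_posSemidef.mp (CFC.sqrt_nonneg A)

lemma Matrix.IsHermitian.spectral_theorem' {n : Type*} [Fintype n] [DecidableEq n]
    {A : Matrix n n ℂ} (hA : A.IsHermitian) :
    A = (hA.eigenvectorUnitary : Matrix n n ℂ) * Matrix.diagonal (RCLike.ofReal ∘ hA.eigenvalues)
      * star (hA.eigenvectorUnitary : Matrix n n ℂ) := by
  conv_lhs => rw [hA.spectral_theorem, Unitary.conjStarAlgAut_apply]


open Matrix in
/-- trace norm equals sum of absolute values of eigenvalues, for Hermitian matrices. -/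
lemma traceNorm_aux {n : Type*} [Fintype n] [DecidableEq n]
    {Δ : Matrix n n ℂ} (hΔ : Δ.IsHermitian) :
    ((Matrix.posSemidef_conjTranspose_mul_self Δ).sqrt.trace) = ∑ i, ((|hΔ.eigenvalues i| : ℝ) : ℂ) := by
  set U : Matrix n n ℂ := (hΔ.eigenvectorUnitary : Matrix n n ℂ)
  have hUU : star U * U = 1 := by
    exact Matrix.UnitaryGroup.star_mul_self hΔ.eigenvectorUnitary
  set D : Matrix n n ℂ := Matrix.diagonal (RCLike.ofReal ∘ hΔ.eigenvalues)
  set Dabs : Matrix n n ℂ := Matrix.diagonal (fun i => ((|hΔ.eigenvalues i| : ℝ) : ℂ))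
  set S : Matrix n n ℂ := U * Dabs * star U with hSdef
  have hDabs : Dabs.PosSemidef := by
    refine Matrix.posSemidef_diagonal_iff.mpr fun i => ?_
    rw [RCLike.nonneg_iff]
    constructor
    · simpa using abs_nonneg _
    · simp
  have hS : S.PosSemidef := by
    simpa [hSdef, Matrix.star_eq_conjTranspose] using hDabs.mul_mul_conjTranspose_same U
  have hsq : S ^ 2 = Δᴴ * Δ := by
    have h1 : Dabs * Dabs = D * D := by
      ext i j
      simp [Dabs, D, Matrix.diagonal_mul_diagonal, Matrix.diagonal_apply]
      rcases eq_or_ne i j with rfl | h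
      · simp only [if_pos rfl, ← Complex.ofReal_mul, abs_mul_abs_self]
      · simp [h]
    have : S ^ 2 = U * (Dabs * Dabs) * star U := by
      rw [sq, hSdef]
      rw [Matrix.mul_assoc (U * Dabs) (star U) (U * Dabs * star U)]
      rw [show star U * (U * Dabs * star U) = (star U * U) * Dabs * star U by
        simp [Matrix.mul_assoc]]
      rw [hUU, Matrix.one_mul]
      simp [Matrix.mul_assoc]
    rw [this, h1, hΔ.eq]
    calc U * (D * D) * star U = (U * D * star U) * (U * D * star U) := by
          rw [Matrix.mul_assoc (U * D) (star U) (U * D * star U),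
            show star U * (U * D * star U) = (star U * U) * D * star U by simp [Matrix.mul_assoc],
            hUU, Matrix.one_mul]
          simp [Matrix.mul_assoc]
      _ = Δ * Δ := by rw [← hΔ.spectral_theorem']
  have hSeq : S = (Matrix.posSemidef_conjTranspose_mul_self Δ).sqrt :=
    hS.eq_sqrt_of_sq_eq (Matrix.posSemidef_conjTranspose_mul_self Δ) hsq
  rw [← hSeq, hSdef, Matrix.trace_mul_cycle, hUU, Matrix.one_mul, Matrix.trace_diagonal]

open Matrix in
lemma helstrom_bound {n : Type*} [Fintype n] [DecidableEq n]
    (Δ P : Matrix n n ℂ) (hΔ : Δ.IsHermitian) (htr : Δ.trace = 0)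
    (hP : Pᴴ = P) (hP2 : P * P = P) :
    (P * Δ).trace.re ≤ ((Matrix.posSemidef_conjTranspose_mul_self Δ).sqrt.trace).re / 2 := by
  set U : Matrix n n ℂ := (hΔ.eigenvectorUnitary : Matrix n n ℂ) with hUdef
  have hUU : star U * U = 1 := Matrix.UnitaryGroup.star_mul_self hΔ.eigenvectorUnitary
  have hUU' : U * star U = 1 := hΔ.eigenvectorUnitary.2.2
  set lam := hΔ.eigenvalues with hlam
  set D : Matrix n n ℂ := Matrix.diagonal (RCLike.ofReal ∘ lam) with hDdef
  set Q : Matrix n n ℂ := star U * P * U with hQdef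
  have hQherm : ∀ i j, Q j i = star (Q i j) := by
    intro i j
    have : Qᴴ = Q := by
      rw [hQdef, Matrix.star_eq_conjTranspose]
      simp [Matrix.conjTranspose_mul, hP, Matrix.mul_assoc]
    conv_lhs => rw [← this]
    rfl
  have hQ2 : Q * Q = Q := by
    rw [hQdef]
    calc star U * P * U * (star U * P * U) = star U * (P * (U * star U) * P) * U := by
          simp [Matrix.mul_assoc]
      _ = star U * P * U := by rw [hUU']; simp [Matrix.mul_assoc, hP2]
  have hQdiag : ∀ i, 0 ≤ (Q i i).re ∧ (Q i i).re ≤ 1 ∧ (Q i i).im = 0 := by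
    intro i
    have h1 : Q i i = ((∑ j, Complex.normSq (Q i j) : ℝ) : ℂ) := by
      conv_lhs => rw [← hQ2]
      rw [Matrix.mul_apply]
      push_cast
      refine Finset.sum_congr rfl fun j _ => ?_
      rw [hQherm i j, Complex.star_def, Complex.mul_conj']
      rw [Complex.normSq_eq_norm_sq]
      push_cast
      ring
    have him : (Q i i).im = 0 := by rw [h1]; simp
    have hre : (Q i i).re = ∑ j, Complex.normSq (Q i j) := by rw [h1]; simp
    have hge : (Q i i).re ≥ Complex.normSq (Q i i) := by
      rw [hre]
      exact Finset.single_le_sum (f := fun j => Complex.normSq (Q i j))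
        (fun j _ => Complex.normSq_nonneg _) (Finset.mem_univ i)
    have hnn : 0 ≤ (Q i i).re := by
      rw [hre]; exact Finset.sum_nonneg fun j _ => Complex.normSq_nonneg _
    refine ⟨hnn, ?_, him⟩
    have : Complex.normSq (Q i i) = (Q i i).re ^ 2 := by
      rw [Complex.normSq_apply, him]; ring
    nlinarith [hge, hnn]
  -- trace of P * Δ
  have htrPD : (P * Δ).trace = ∑ i, Q i i * (lam i : ℂ) := by
    conv_lhs => rw [hΔ.spectral_theorem']
    rw [show P * ((hΔ.eigenvectorUnitary : Matrix n n ℂ) *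
        Matrix.diagonal (RCLike.ofReal ∘ lam) * star (hΔ.eigenvectorUnitary : Matrix n n ℂ))
        = (P * U) * D * star U by rw [← hUdef, ← hDdef]; simp [Matrix.mul_assoc]]
    rw [Matrix.trace_mul_cycle]
    rw [show star U * (P * U) * D = Q * D by rw [hQdef]; simp [Matrix.mul_assoc]]
    rw [Matrix.trace]
    refine Finset.sum_congr rfl fun i _ => ?_
    rw [Matrix.diag_apply, Matrix.mul_diagonal]
    rfl
  -- trace of Δ is the sum of eigenvalues, which is 0
  have hsum0 : ∑ i, lam i = 0 := by
    have h2 : Δ.trace = ∑ i, (lam i : ℂ) := by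
      conv_lhs => rw [hΔ.spectral_theorem', Matrix.trace_mul_cycle, ← hUdef, hUU,
        Matrix.one_mul, Matrix.trace_diagonal]
      rfl
    have := htr
    rw [h2] at this
    have : ((∑ i, lam i : ℝ) : ℂ) = 0 := by push_cast; exact this
    exact_mod_cast this
  rw [traceNorm_aux hΔ, htrPD]
  have hre : (∑ i, Q i i * (lam i : ℂ)).re = ∑ i, (Q i i).re * lam i := by
    rw [Complex.re_sum]
    refine Finset.sum_congr rfl fun i _ => ?_
    simp [Complex.mul_re]
  rw [hre]
  have habs : ((∑ i, ((|lam i| : ℝ) : ℂ)).re) = ∑ i, |lam i| := by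
    push_cast; simp
  rw [habs]
  have key : ∀ i, (Q i i).re * lam i ≤ (|lam i| + lam i) / 2 := by
    intro i
    obtain ⟨h0, h1, -⟩ := hQdiag i
    rcases le_or_gt 0 (lam i) with h | h
    · rw [abs_of_nonneg h]
      nlinarith
    · rw [abs_of_neg h]
      nlinarith
  calc ∑ i, (Q i i).re * lam i ≤ ∑ i, (|lam i| + lam i) / 2 :=
        Finset.sum_le_sum fun i _ => key i
    _ = ((∑ i, |lam i|) + ∑ i, lam i) / 2 := by rw [← Finset.sum_add_distrib, Finset.sum_div]
    _ = (∑ i, |lam i|) / 2 := by rw [hsum0, add_zero]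


lemma maxEntVec_star (k : ℕ) (p : Fin k × Fin k) : star (maxEntVec k p) = maxEntVec k p := by
  unfold maxEntVec
  split_ifs <;> simp

lemma maxEntVec_mul_self (k : ℕ) (p : Fin k × Fin k) (hp : p.1 = p.2) :
    maxEntVec k p * maxEntVec k p = ((k : ℝ)⁻¹ : ℂ) := by
  unfold maxEntVec
  rw [if_pos hp, ← mul_inv, ← Complex.ofReal_mul, Real.mul_self_sqrt (by positivity)]

lemma maxEntVec_sum (k : ℕ) (hk : 1 ≤ k) :
    ∑ r : Fin k × Fin k, star (maxEntVec k r) * maxEntVec k r = 1 := by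
  have : ∀ r : Fin k × Fin k, star (maxEntVec k r) * maxEntVec k r
      = if r.1 = r.2 then ((k : ℝ)⁻¹ : ℂ) else 0 := by
    intro r
    rw [maxEntVec_star]
    by_cases h : r.1 = r.2
    · rw [if_pos h, maxEntVec_mul_self k r h]
    · rw [if_neg h]
      unfold maxEntVec
      rw [if_neg h, mul_zero]
  rw [Finset.sum_congr rfl fun r _ => this r]
  rw [Fintype.sum_prod_type]
  simp only [Finset.sum_ite_eq, Finset.mem_univ, if_true]
  rw [Finset.sum_const, Finset.card_univ, Fintype.card_fin, nsmul_eq_mul]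
  have hk0 : (k : ℂ) ≠ 0 := by exact_mod_cast Nat.pos_of_ne_zero (by omega) |>.ne'
  push_cast
  field_simp

lemma maxEntState_herm (k : ℕ) : (maxEntState k)ᴴ = maxEntState k := by
  ext p q
  simp [maxEntState, Matrix.conjTranspose_apply, Matrix.vecMulVec_apply, maxEntVec_star,
    mul_comm]

lemma maxEntState_idem (k : ℕ) (hk : 1 ≤ k) :
    maxEntState k * maxEntState k = maxEntState k := by
  ext p q
  rw [Matrix.mul_apply]
  simp only [maxEntState, Matrix.vecMulVec_apply, Pi.star_apply]
  calc ∑ r, maxEntVec k p * star (maxEntVec k r) * (maxEntVec k r * star (maxEntVec k q))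
      = maxEntVec k p * star (maxEntVec k q)
        * ∑ r, star (maxEntVec k r) * maxEntVec k r := by
        rw [Finset.mul_sum]
        exact Finset.sum_congr rfl fun r _ => by ring
    _ = maxEntVec k p * star (maxEntVec k q) := by rw [maxEntVec_sum k hk, mul_one]

lemma maxEntState_trace (k : ℕ) (hk : 1 ≤ k) : (maxEntState k).trace = 1 := by
  rw [Matrix.trace]
  calc ∑ p, (maxEntState k).diag p = ∑ p, star (maxEntVec k p) * maxEntVec k p := by
        refine Finset.sum_congr rfl fun p _ => ?_
        simp only [Matrix.diag_apply, maxEntState, Matrix.vecMulVec_apply, Pi.star_apply]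
        ring
    _ = 1 := maxEntVec_sum k hk

lemma kron_std (k : ℕ) (x : Fin k) :
    Matrix.single x x (1 : ℂ) ⊗ₖ Matrix.single x x (1 : ℂ)
      = Matrix.single ((x, x) : Fin k × Fin k) (x, x) 1 := by
  ext ⟨a, b⟩ ⟨c, d⟩
  simp only [Matrix.kroneckerMap_apply, Matrix.single, Matrix.of_apply, Prod.mk.injEq]
  by_cases hxa : x = a <;> by_cases hxb : x = b <;> by_cases hxc : x = c <;>
    by_cases hxd : x = d <;> simp_all

lemma std_herm {n : Type*} [DecidableEq n] (i : n) :
    (Matrix.single i i (1 : ℂ))ᴴ = Matrix.single i i 1 := by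
  ext a b
  simp only [Matrix.conjTranspose_apply, Matrix.single, Matrix.of_apply]
  by_cases h1 : i = a <;> by_cases h2 : i = b <;> simp_all

lemma trace_mul_std {n : Type*} [Fintype n] [DecidableEq n] (A : Matrix n n ℂ) (i j : n) :
    (A * Matrix.single i j 1).trace = A j i := by
  rw [Matrix.trace]
  rw [Finset.sum_eq_single j]
  · simp [Matrix.diag_apply]
  · intro b _ hb
    simp [Matrix.diag_apply, hb]
  · simp

lemma std_trace {n : Type*} [Fintype n] [DecidableEq n] (i : n) :
    (Matrix.single i i (1 : ℂ)).trace = 1 := by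
  have := trace_mul_std (1 : Matrix n n ℂ) i i
  simpa using this

lemma classCorr_trace (k : ℕ) (hk : 1 ≤ k) : (classCorrState k).trace = 1 := by
  unfold classCorrState
  rw [Matrix.trace_smul, Matrix.trace_sum]
  simp only [Matrix.trace_kronecker, std_trace, mul_one]
  rw [Finset.sum_const, Finset.card_univ, Fintype.card_fin, nsmul_eq_mul, mul_one, smul_eq_mul]
  rw [inv_mul_cancel₀ (by exact_mod_cast Nat.pos_of_ne_zero (by omega) |>.ne')]

lemma kron_conjTranspose {l m n p : Type*} [Fintype l] [Fintype m] [Fintype n] [Fintype p]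
    (A : Matrix l m ℂ) (B : Matrix n p ℂ) : (A ⊗ₖ B)ᴴ = Aᴴ ⊗ₖ Bᴴ := by
  ext ⟨i, j⟩ ⟨a, b⟩
  simp only [Matrix.conjTranspose_apply, Matrix.kroneckerMap_apply, star_mul']
  try ring

lemma classCorr_herm (k : ℕ) : (classCorrState k)ᴴ = classCorrState k := by
  unfold classCorrState
  rw [Matrix.conjTranspose_smul, Matrix.conjTranspose_sum]
  simp only [kron_conjTranspose, std_herm]
  congr 1
  · simp

lemma maxEnt_mul_classCorr_trace (k : ℕ) (hk : 1 ≤ k) :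
    (maxEntState k * classCorrState k).trace = ((k : ℝ)⁻¹ : ℂ) := by
  unfold classCorrState
  rw [Matrix.mul_smul, Matrix.trace_smul, Matrix.mul_sum, Matrix.trace_sum]
  simp only [kron_std, trace_mul_std]
  have : ∀ x : Fin k, maxEntState k (x, x) (x, x) = ((k : ℝ)⁻¹ : ℂ) := by
    intro x
    simp only [maxEntState, Matrix.vecMulVec_apply, Pi.star_apply, maxEntVec_star]
    exact maxEntVec_mul_self k (x, x) rfl
  simp only [this]
  rw [Finset.sum_const, Finset.card_univ, Fintype.card_fin, nsmul_eq_mul, smul_eq_mul]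
  have hk0 : (k : ℂ) ≠ 0 := by exact_mod_cast Nat.pos_of_ne_zero (by omega) |>.ne'
  push_cast
  field_simp


open Matrix in
lemma traceNorm_sub_comm {n : Type*} [Fintype n] [DecidableEq n] (A B : Matrix n n ℂ) :
    traceNorm (A - B) = traceNorm (B - A) := by
  unfold traceNorm
  have h : (Matrix.posSemidef_conjTranspose_mul_self (A - B)).sqrt ^ 2
      = (B - A)ᴴ * (B - A) := by
    rw [(Matrix.posSemidef_conjTranspose_mul_self (A - B)).sq_sqrt,
      ← neg_sub B A, Matrix.conjTranspose_neg, Matrix.neg_mul, Matrix.mul_neg, neg_neg]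
  rw [(Matrix.posSemidef_conjTranspose_mul_self (A - B)).posSemidef_sqrt.eq_sqrt_of_sq_eq
    (Matrix.posSemidef_conjTranspose_mul_self (B - A)) h]

/-- the trace-distance lower bound between the database owner's
states after an honest user's query `i` versus query `j` in the protocol of
Giovannetti, Lloyd and Maccone. -/
theorem trace_dist_attack_glm
    (ki kj d : ℕ) (hki : 1 ≤ ki) (hkj : 1 ≤ kj) (hd : 1 ≤ d)
    (ω : Matrix (Fin d) (Fin d) ℂ) (hω : IsDensityMatrix ω) :
    1 - 1 / (max ki kj : ℝ) ≤
      traceDist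
        ((classCorrState ki ⊗ₖ maxEntState kj) ⊗ₖ ω)
        ((maxEntState ki ⊗ₖ classCorrState kj) ⊗ₖ ω) := by
  set ρ := (classCorrState ki ⊗ₖ maxEntState kj) ⊗ₖ ω with hρdef
  set σ := (maxEntState ki ⊗ₖ classCorrState kj) ⊗ₖ ω with hσdef
  have hωherm : ωᴴ = ω := hω.1.1
  have hρherm : ρᴴ = ρ := by
    rw [hρdef, kron_conjTranspose, kron_conjTranspose, classCorr_herm, maxEntState_herm, hωherm]
  have hσherm : σᴴ = σ := by
    rw [hσdef, kron_conjTranspose, kron_conjTranspose, classCorr_herm, maxEntState_herm, hωherm]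
  have htrρ : ρ.trace = 1 := by
    rw [hρdef, Matrix.trace_kronecker, Matrix.trace_kronecker, classCorr_trace ki hki,
      maxEntState_trace kj hkj, hω.2, one_mul, one_mul]
  have htrσ : σ.trace = 1 := by
    rw [hσdef, Matrix.trace_kronecker, Matrix.trace_kronecker, classCorr_trace kj hkj,
      maxEntState_trace ki hki, hω.2, one_mul, one_mul]
  rcases le_total ki kj with hcase | hcase
  · -- max = kj
    set P := ((1 : Matrix (Fin ki × Fin ki) (Fin ki × Fin ki) ℂ) ⊗ₖ maxEntState kj) ⊗ₖ
      (1 : Matrix (Fin d) (Fin d) ℂ) with hPdef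
    have hP : Pᴴ = P := by
      rw [hPdef, kron_conjTranspose, kron_conjTranspose, Matrix.conjTranspose_one,
        Matrix.conjTranspose_one, maxEntState_herm]
    have hP2 : P * P = P := by
      rw [hPdef, ← Matrix.mul_kronecker_mul, ← Matrix.mul_kronecker_mul, Matrix.one_mul,
        Matrix.one_mul, maxEntState_idem kj hkj]
    have hΔherm : (ρ - σ).IsHermitian := by
      unfold Matrix.IsHermitian
      rw [Matrix.conjTranspose_sub, hρherm, hσherm]
    have htr0 : (ρ - σ).trace = 0 := by rw [Matrix.trace_sub, htrρ, htrσ, sub_self]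
    have hb := helstrom_bound (ρ - σ) P hΔherm htr0 hP hP2
    have hPρ : (P * ρ).trace = 1 := by
      rw [hPdef, hρdef, ← Matrix.mul_kronecker_mul, ← Matrix.mul_kronecker_mul,
        Matrix.one_mul, Matrix.one_mul, Matrix.trace_kronecker, Matrix.trace_kronecker,
        classCorr_trace ki hki, maxEntState_idem kj hkj, maxEntState_trace kj hkj, hω.2]
      ring
    have hPσ : (P * σ).trace = ((kj : ℝ)⁻¹ : ℂ) := by
      rw [hPdef, hσdef, ← Matrix.mul_kronecker_mul, ← Matrix.mul_kronecker_mul,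
        Matrix.one_mul, Matrix.one_mul, Matrix.trace_kronecker, Matrix.trace_kronecker,
        maxEntState_trace ki hki, maxEnt_mul_classCorr_trace kj hkj, hω.2]
      ring
    have hre : (P * (ρ - σ)).trace.re = 1 - (kj : ℝ)⁻¹ := by
      rw [Matrix.mul_sub, Matrix.trace_sub, hPρ, hPσ]
      simp
    rw [hre] at hb
    have hmax : (max (ki:ℝ) (kj:ℝ)) = (kj : ℝ) := max_eq_right (Nat.cast_le.mpr hcase)
    rw [hmax, one_div]
    exact hb
  · -- max = ki
    set P := (maxEntState ki ⊗ₖ (1 : Matrix (Fin kj × Fin kj) (Fin kj × Fin kj) ℂ)) ⊗ₖ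
      (1 : Matrix (Fin d) (Fin d) ℂ) with hPdef
    have hP : Pᴴ = P := by
      rw [hPdef, kron_conjTranspose, kron_conjTranspose, Matrix.conjTranspose_one,
        Matrix.conjTranspose_one, maxEntState_herm]
    have hP2 : P * P = P := by
      rw [hPdef, ← Matrix.mul_kronecker_mul, ← Matrix.mul_kronecker_mul, Matrix.one_mul,
        Matrix.one_mul, maxEntState_idem ki hki]
    have hΔherm : (σ - ρ).IsHermitian := by
      unfold Matrix.IsHermitian
      rw [Matrix.conjTranspose_sub, hρherm, hσherm]
    have htr0 : (σ - ρ).trace = 0 := by rw [Matrix.trace_sub, htrρ, htrσ, sub_self]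
    have hb := helstrom_bound (σ - ρ) P hΔherm htr0 hP hP2
    have hPσ : (P * σ).trace = 1 := by
      rw [hPdef, hσdef, ← Matrix.mul_kronecker_mul, ← Matrix.mul_kronecker_mul,
        Matrix.one_mul, Matrix.one_mul, Matrix.trace_kronecker, Matrix.trace_kronecker,
        classCorr_trace kj hkj, maxEntState_idem ki hki, maxEntState_trace ki hki, hω.2]
      ring
    have hPρ : (P * ρ).trace = ((ki : ℝ)⁻¹ : ℂ) := by
      rw [hPdef, hρdef, ← Matrix.mul_kronecker_mul, ← Matrix.mul_kronecker_mul,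
        Matrix.one_mul, Matrix.one_mul, Matrix.trace_kronecker, Matrix.trace_kronecker,
        maxEntState_trace kj hkj, maxEnt_mul_classCorr_trace ki hki, hω.2]
      ring
    have hre : (P * (σ - ρ)).trace.re = 1 - (ki : ℝ)⁻¹ := by
      rw [Matrix.mul_sub, Matrix.trace_sub, hPσ, hPρ]
      simp
    rw [hre] at hb
    have hmax : (max (ki:ℝ) (kj:ℝ)) = (ki : ℝ) := max_eq_left (Nat.cast_le.mpr hcase)
    rw [hmax, one_div]
    calc (1 : ℝ) - (ki : ℝ)⁻¹
        ≤ traceNorm (σ - ρ) / 2 := hb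
      _ = traceNorm (ρ - σ) / 2 := by rw [traceNorm_sub_comm]
      _ = traceDist ρ σ := rfl
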